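/- Let g be a finite-dimensional complex Lie algebra with a nondegenerate symmetric invariant bilinear form ⟨·,·⟩, dual bases X¹,…,X^d and X₁,…,X_d, and a finite-dimensional representation π : g → End V. Then in End V ⊗ End V ⊗ U(ĝ) the identity G₁[r]G₂[s] − G₂[s]G₁[r] = −Ω G₂[r+s] + G₂[r+s]Ω + r δ_{r,−s} Ω K holds for all r,s ∈ ℤ. -/

import Mathlib

noncomputable section

set_option maxHeartbeats 1000000

open scoped TensorProduct

attribute [local instance 100] LieRing.ofAssociativeRing

section AffineGen

variable (L : Type) [LieRing L] [LieAlgebra ℂ L]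
variable (V : Type) [AddCommGroup V] [Module ℂ V]
variable (Lh : Type) [LieRing Lh] [LieAlgebra ℂ Lh]

/-- `G₁[r] = Σᵢ π(Xⁱ) ⊗ 1 ⊗ Xᵢ[r] ∈ End V ⊗ End V ⊗ U(ĝ)`. -/
def G1aff (π : L →ₗ⁅ℂ⁆ Module.End ℂ V) (d : ℕ) (bX : Fin d → L) (Xlo : Fin d → L)
    (rep : L → ℤ → Lh) (r : ℤ) :
    Module.End ℂ V ⊗[ℂ] (Module.End ℂ V ⊗[ℂ] UniversalEnvelopingAlgebra ℂ Lh) :=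
  ∑ i : Fin d, π (bX i) ⊗ₜ[ℂ]
    ((1 : Module.End ℂ V) ⊗ₜ[ℂ] UniversalEnvelopingAlgebra.ι ℂ (rep (Xlo i) r))

/-- `G₂[s] = Σᵢ 1 ⊗ π(Xⁱ) ⊗ Xᵢ[s] ∈ End V ⊗ End V ⊗ U(ĝ)`. -/
def G2aff (π : L →ₗ⁅ℂ⁆ Module.End ℂ V) (d : ℕ) (bX : Fin d → L) (Xlo : Fin d → L)
    (rep : L → ℤ → Lh) (s : ℤ) :
    Module.End ℂ V ⊗[ℂ] (Module.End ℂ V ⊗[ℂ] UniversalEnvelopingAlgebra ℂ Lh) :=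
  ∑ i : Fin d, (1 : Module.End ℂ V) ⊗ₜ[ℂ]
    (π (bX i) ⊗ₜ[ℂ] UniversalEnvelopingAlgebra.ι ℂ (rep (Xlo i) s))

/-- `Ω ⊗ 1 = Σᵢ π(Xⁱ) ⊗ π(Xᵢ) ⊗ 1`. -/
def OmAff (π : L →ₗ⁅ℂ⁆ Module.End ℂ V) (d : ℕ) (bX : Fin d → L) (Xlo : Fin d → L) :
    Module.End ℂ V ⊗[ℂ] (Module.End ℂ V ⊗[ℂ] UniversalEnvelopingAlgebra ℂ Lh) :=
  ∑ i : Fin d, π (bX i) ⊗ₜ[ℂ]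
    (π (Xlo i) ⊗ₜ[ℂ] (1 : UniversalEnvelopingAlgebra ℂ Lh))

/-- `Ω ⊗ K = Σᵢ π(Xⁱ) ⊗ π(Xᵢ) ⊗ K`. -/
def OmKAff (π : L →ₗ⁅ℂ⁆ Module.End ℂ V) (d : ℕ) (bX : Fin d → L) (Xlo : Fin d → L)
    (K : Lh) :
    Module.End ℂ V ⊗[ℂ] (Module.End ℂ V ⊗[ℂ] UniversalEnvelopingAlgebra ℂ Lh) :=
  ∑ i : Fin d, π (bX i) ⊗ₜ[ℂ]
    (π (Xlo i) ⊗ₜ[ℂ] UniversalEnvelopingAlgebra.ι ℂ K)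

end AffineGen

/-- for a finite-dimensional complex Lie algebra `g` with nondegenerate
symmetric invariant form, dual bases, and finite-dimensional representation `π`, the
identity `G₁[r]G₂[s] − G₂[s]G₁[r] = −ΩG₂[r+s] + G₂[r+s]Ω + r δ_{r,−s} ΩK` holds in
`End V ⊗ End V ⊗ U(ĝ)` for all integers `r, s`; here `ĝ = g[t,t⁻¹] ⊕ ℂK` is the affine
Kac–Moody algebra, encoded by a Lie algebra `Lh` with central element `K` and a family
`X[r] = rep X r` which is linear in `X`, satisfies the affine commutation relations, and
together with `K` forms a basis of `Lh`. -/
theorem affine_matrix_relations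
    (L : Type) [LieRing L] [LieAlgebra ℂ L] [Module.Finite ℂ L]
    (V : Type) [AddCommGroup V] [Module ℂ V] [Module.Finite ℂ V]
    (B : LinearMap.BilinForm ℂ L)
    (hsym : ∀ X Y : L, B X Y = B Y X)
    (hinv : ∀ X Y Z : L, B ⁅X, Y⁆ Z = B X ⁅Y, Z⁆)
    (hnd : B.Nondegenerate)
    (d : ℕ) (bX : Module.Basis (Fin d) ℂ L) (Xlo : Fin d → L)
    (hdual : ∀ i j, B (bX i) (Xlo j) = if i = j then 1 else 0)
    (π : L →ₗ⁅ℂ⁆ Module.End ℂ V)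
    (Lh : Type) [LieRing Lh] [LieAlgebra ℂ Lh]
    (K : Lh) (rep : L → ℤ → Lh)
    (hlin : ∀ r : ℤ, IsLinearMap ℂ fun X : L => rep X r)
    (hK : ∀ z : Lh, ⁅K, z⁆ = 0)
    (hbr : ∀ (X Y : L) (r s : ℤ),
      ⁅rep X r, rep Y s⁆ =
        rep ⁅X, Y⁆ (r + s) + (if r + s = 0 then (r : ℂ) * B X Y else 0) • K)
    (bh : Module.Basis ((Fin d × ℤ) ⊕ Unit) ℂ Lh)
    (hbh : ∀ (i : Fin d) (r : ℤ), bh (Sum.inl (i, r)) = rep (bX i) r)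
    (hbhK : bh (Sum.inr ()) = K) :
    ∀ r s : ℤ,
      G1aff L V Lh π d bX Xlo rep r * G2aff L V Lh π d bX Xlo rep s -
          G2aff L V Lh π d bX Xlo rep s * G1aff L V Lh π d bX Xlo rep r =
        -(OmAff L V Lh π d bX Xlo * G2aff L V Lh π d bX Xlo rep (r + s)) +
          G2aff L V Lh π d bX Xlo rep (r + s) * OmAff L V Lh π d bX Xlo +
          (if r + s = 0 then (r : ℂ) else 0) • OmKAff L V Lh π d bX Xlo K := by
    classical
  intro r s
  -- dual pairing facts
  have hdual' : ∀ k j : Fin d, B (Xlo k) (bX j) = if j = k then 1 else 0 := fun k j => by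
    rw [hsym]; exact hdual j k
  have hrepr : ∀ (Y : L) (k : Fin d), bX.repr Y k = B Y (Xlo k) := by
    intro Y k
    conv_rhs => rw [← bX.sum_repr Y]
    simp only [map_sum, map_smul, LinearMap.sum_apply, LinearMap.smul_apply, hdual, smul_eq_mul,
      mul_ite, mul_one, mul_zero, Finset.sum_ite_eq', Finset.mem_univ, ite_true]
  have hexpB : ∀ Y : L, Y = ∑ k, B Y (Xlo k) • bX k := by
    intro Y
    conv_lhs => rw [← bX.sum_repr Y]
    exact Finset.sum_congr rfl fun k _ => by rw [hrepr]
  have hexpX : ∀ Y : L, Y = ∑ k, B (bX k) Y • Xlo k := by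
    intro Y
    have hb : ∀ j, B (Y - ∑ k, B (bX k) Y • Xlo k) (bX j) = 0 := by
      intro j
      have h1 : B Y (bX j) = B (bX j) Y := hsym Y (bX j)
      simp [map_sub, map_sum, map_smul, LinearMap.sub_apply, LinearMap.sum_apply,
        LinearMap.smul_apply, hdual', h1, Finset.sum_ite_eq]
    have hz : ∀ W, B (Y - ∑ k, B (bX k) Y • Xlo k) W = 0 := by
      intro W
      conv_lhs => rw [← bX.sum_repr W, map_sum]
      refine Finset.sum_eq_zero fun j _ => ?_
      rw [map_smul, hb, smul_zero]
    exact sub_eq_zero.mp (hnd.1 _ hz)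
  have hreplin : ∀ (t : ℤ) (c : Fin d → ℂ) (Z : Fin d → L),
      rep (∑ k, c k • Z k) t = ∑ k, c k • rep (Z k) t := by
    intro t c Z
    let f : L →ₗ[ℂ] Lh := IsLinearMap.mk' _ (hlin t)
    show f (∑ k, c k • Z k) = ∑ k, c k • f (Z k)
    rw [map_sum]
    exact Finset.sum_congr rfl fun k _ => map_smul f _ _
  have hiota : ∀ (c : Fin d → ℂ) (z : Fin d → Lh),
      UniversalEnvelopingAlgebra.ι ℂ (∑ k, c k • z k) =
        ∑ k, c k • UniversalEnvelopingAlgebra.ι ℂ (z k) := by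
    intro c z
    show (UniversalEnvelopingAlgebra.ι ℂ).toLinearMap (∑ k, c k • z k) = _
    rw [map_sum]
    exact Finset.sum_congr rfl fun k _ => map_smul _ _ _
  have hpi : ∀ (c : Fin d → ℂ) (z : Fin d → L),
      π (∑ k, c k • z k) = ∑ k, c k • π (z k) := by
    intro c z
    show π.toLinearMap (∑ k, c k • z k) = _
    rw [map_sum]
    exact Finset.sum_congr rfl fun k _ => map_smul _ _ _
  have hsms : ∀ (f g : Fin d → Module.End ℂ V ⊗[ℂ]
        (Module.End ℂ V ⊗[ℂ] UniversalEnvelopingAlgebra ℂ Lh)),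
      (∑ i, f i) * (∑ j, g j) = ∑ i, ∑ j, f i * g j := fun f g =>
    Finset.sum_mul_sum (R := Module.End ℂ V ⊗[ℂ]
      (Module.End ℂ V ⊗[ℂ] UniversalEnvelopingAlgebra ℂ Lh)) _ _ f g
  have hmul : ∀ (a a' b b' : Module.End ℂ V) (u u' : UniversalEnvelopingAlgebra ℂ Lh),
      (a ⊗ₜ[ℂ] (b ⊗ₜ[ℂ] u)) * (a' ⊗ₜ[ℂ] (b' ⊗ₜ[ℂ] u')) =
        (a * a') ⊗ₜ[ℂ] ((b * b') ⊗ₜ[ℂ] (u * u')) := by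
    intros
    rw [Algebra.TensorProduct.tmul_mul_tmul, Algebra.TensorProduct.tmul_mul_tmul]
  have h1 : G1aff L V Lh π d bX Xlo rep r * G2aff L V Lh π d bX Xlo rep s =
      ∑ i : Fin d, ∑ j : Fin d, π (bX i) ⊗ₜ[ℂ] (π (bX j) ⊗ₜ[ℂ]
        (UniversalEnvelopingAlgebra.ι ℂ (rep (Xlo i) r) *
          UniversalEnvelopingAlgebra.ι ℂ (rep (Xlo j) s))) := by
    unfold G1aff G2aff
    rw [hsms]
    exact Finset.sum_congr rfl fun i _ => Finset.sum_congr rfl fun j _ => by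
      rw [hmul, mul_one, one_mul]
  have h2 : G2aff L V Lh π d bX Xlo rep s * G1aff L V Lh π d bX Xlo rep r =
      ∑ i : Fin d, ∑ j : Fin d, π (bX i) ⊗ₜ[ℂ] (π (bX j) ⊗ₜ[ℂ]
        (UniversalEnvelopingAlgebra.ι ℂ (rep (Xlo j) s) *
          UniversalEnvelopingAlgebra.ι ℂ (rep (Xlo i) r))) := by
    unfold G1aff G2aff
    rw [hsms, Finset.sum_comm]
    exact Finset.sum_congr rfl fun i _ => Finset.sum_congr rfl fun j _ => by
      rw [hmul, mul_one, one_mul]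
  have h3 : OmAff L V Lh π d bX Xlo * G2aff L V Lh π d bX Xlo rep (r + s) =
      ∑ a : Fin d, ∑ b : Fin d, π (bX b) ⊗ₜ[ℂ] ((π (Xlo b) * π (bX a)) ⊗ₜ[ℂ]
        UniversalEnvelopingAlgebra.ι ℂ (rep (Xlo a) (r + s))) := by
    unfold OmAff G2aff
    rw [hsms, Finset.sum_comm]
    exact Finset.sum_congr rfl fun a _ => Finset.sum_congr rfl fun b _ => by
      rw [hmul, mul_one, one_mul]
  have h4 : G2aff L V Lh π d bX Xlo rep (r + s) * OmAff L V Lh π d bX Xlo =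
      ∑ a : Fin d, ∑ b : Fin d, π (bX b) ⊗ₜ[ℂ] ((π (bX a) * π (Xlo b)) ⊗ₜ[ℂ]
        UniversalEnvelopingAlgebra.ι ℂ (rep (Xlo a) (r + s))) := by
    unfold OmAff G2aff
    rw [hsms]
    exact Finset.sum_congr rfl fun a _ => Finset.sum_congr rfl fun b _ => by
      rw [hmul, mul_one, one_mul]
  have hmu : ∀ i j : Fin d,
      (UniversalEnvelopingAlgebra.ι ℂ (rep (Xlo i) r) *
          UniversalEnvelopingAlgebra.ι ℂ (rep (Xlo j) s) -
        UniversalEnvelopingAlgebra.ι ℂ (rep (Xlo j) s) *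
          UniversalEnvelopingAlgebra.ι ℂ (rep (Xlo i) r)) =
      UniversalEnvelopingAlgebra.ι ℂ (rep ⁅Xlo i, Xlo j⁆ (r + s)) +
        (if r + s = 0 then (r : ℂ) * B (Xlo i) (Xlo j) else 0) •
          UniversalEnvelopingAlgebra.ι ℂ K := by
    intro i j
    rw [← Ring.lie_def, ← LieHom.map_lie, hbr, map_add, map_smul]
  have hsubdist : ∀ f g : Fin d → Module.End ℂ V ⊗[ℂ]
        (Module.End ℂ V ⊗[ℂ] UniversalEnvelopingAlgebra ℂ Lh),
      (∑ i, f i) - ∑ i, g i = ∑ i, (f i - g i) := fun f g =>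
    (Finset.sum_sub_distrib (s := Finset.univ) (f := f) (g := g)).symm
  have hsmsum : ∀ (c : ℂ) (f : Fin d → Module.End ℂ V ⊗[ℂ]
        (Module.End ℂ V ⊗[ℂ] UniversalEnvelopingAlgebra ℂ Lh)),
      c • ∑ i, f i = ∑ i, c • f i := fun c f => Finset.smul_sum (s := Finset.univ) (r := c) (f := f)
  have hneg : ∀ a b c : Module.End ℂ V ⊗[ℂ]
        (Module.End ℂ V ⊗[ℂ] UniversalEnvelopingAlgebra ℂ Lh),
      -a + b + c = b - a + c := fun a b c => by abel
  rw [h1, h2, h3, h4]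
  unfold OmKAff
  rw [hneg]
  simp only [hsubdist]
  simp only [hsmsum]
  have hL : (∑ i : Fin d, ∑ j : Fin d,
        (π (bX i) ⊗ₜ[ℂ] (π (bX j) ⊗ₜ[ℂ]
          (UniversalEnvelopingAlgebra.ι ℂ (rep (Xlo i) r) *
            UniversalEnvelopingAlgebra.ι ℂ (rep (Xlo j) s))) -
         π (bX i) ⊗ₜ[ℂ] (π (bX j) ⊗ₜ[ℂ]
          (UniversalEnvelopingAlgebra.ι ℂ (rep (Xlo j) s) *
            UniversalEnvelopingAlgebra.ι ℂ (rep (Xlo i) r))))) =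
      (∑ i : Fin d, ∑ j : Fin d, π (bX i) ⊗ₜ[ℂ] (π (bX j) ⊗ₜ[ℂ]
          UniversalEnvelopingAlgebra.ι ℂ (rep ⁅Xlo i, Xlo j⁆ (r + s)))) +
      ∑ i : Fin d, ∑ j : Fin d, (if r + s = 0 then (r : ℂ) * B (Xlo i) (Xlo j) else 0) •
          (π (bX i) ⊗ₜ[ℂ] (π (bX j) ⊗ₜ[ℂ] UniversalEnvelopingAlgebra.ι ℂ K)) := by
    rw [← Finset.sum_add_distrib]
    refine Finset.sum_congr rfl fun i _ => ?_
    rw [← Finset.sum_add_distrib]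
    refine Finset.sum_congr rfl fun j _ => ?_
    rw [← TensorProduct.tmul_sub, ← TensorProduct.tmul_sub, hmu i j,
      TensorProduct.tmul_add, TensorProduct.tmul_add, TensorProduct.tmul_smul,
      TensorProduct.tmul_smul]
  have hS1 : (∑ i : Fin d, ∑ j : Fin d, π (bX i) ⊗ₜ[ℂ] (π (bX j) ⊗ₜ[ℂ]
        UniversalEnvelopingAlgebra.ι ℂ (rep ⁅Xlo i, Xlo j⁆ (r + s)))) =
      ∑ a : Fin d, ∑ b : Fin d,
        (π (bX b) ⊗ₜ[ℂ] ((π (bX a) * π (Xlo b)) ⊗ₜ[ℂ]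
          UniversalEnvelopingAlgebra.ι ℂ (rep (Xlo a) (r + s))) -
         π (bX b) ⊗ₜ[ℂ] ((π (Xlo b) * π (bX a)) ⊗ₜ[ℂ]
          UniversalEnvelopingAlgebra.ι ℂ (rep (Xlo a) (r + s)))) := by
    have lhs_exp : (∑ i : Fin d, ∑ j : Fin d, π (bX i) ⊗ₜ[ℂ] (π (bX j) ⊗ₜ[ℂ]
          UniversalEnvelopingAlgebra.ι ℂ (rep ⁅Xlo i, Xlo j⁆ (r + s)))) =
        ∑ i : Fin d, ∑ j : Fin d, ∑ k : Fin d, B (bX k) ⁅Xlo i, Xlo j⁆ •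
          (π (bX i) ⊗ₜ[ℂ] (π (bX j) ⊗ₜ[ℂ]
            UniversalEnvelopingAlgebra.ι ℂ (rep (Xlo k) (r + s)))) := by
      refine Finset.sum_congr rfl fun i _ => Finset.sum_congr rfl fun j _ => ?_
      conv_lhs => rw [hexpX ⁅Xlo i, Xlo j⁆]
      rw [hreplin, hiota]
      simp only [TensorProduct.tmul_sum, TensorProduct.tmul_smul]
    have rhs_exp : (∑ a : Fin d, ∑ b : Fin d,
          (π (bX b) ⊗ₜ[ℂ] ((π (bX a) * π (Xlo b)) ⊗ₜ[ℂ]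
            UniversalEnvelopingAlgebra.ι ℂ (rep (Xlo a) (r + s))) -
           π (bX b) ⊗ₜ[ℂ] ((π (Xlo b) * π (bX a)) ⊗ₜ[ℂ]
            UniversalEnvelopingAlgebra.ι ℂ (rep (Xlo a) (r + s))))) =
        ∑ a : Fin d, ∑ b : Fin d, ∑ c : Fin d, B (bX a) ⁅Xlo b, Xlo c⁆ •
          (π (bX b) ⊗ₜ[ℂ] (π (bX c) ⊗ₜ[ℂ]
            UniversalEnvelopingAlgebra.ι ℂ (rep (Xlo a) (r + s)))) := by
      refine Finset.sum_congr rfl fun a _ => Finset.sum_congr rfl fun b _ => ?_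
      have h5 : π (bX a) * π (Xlo b) - π (Xlo b) * π (bX a) = π ⁅bX a, Xlo b⁆ := by
        rw [LieHom.map_lie, Ring.lie_def]
      rw [← TensorProduct.tmul_sub, ← TensorProduct.sub_tmul, h5]
      conv_lhs => rw [hexpB ⁅bX a, Xlo b⁆]
      rw [hpi]
      simp only [TensorProduct.sum_tmul, ← TensorProduct.smul_tmul',
        TensorProduct.tmul_sum, TensorProduct.tmul_smul, hinv]
    rw [lhs_exp, rhs_exp]
    have h6 : ∀ i : Fin d, (∑ j : Fin d, ∑ k : Fin d, B (bX k) ⁅Xlo i, Xlo j⁆ •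
          (π (bX i) ⊗ₜ[ℂ] (π (bX j) ⊗ₜ[ℂ]
            UniversalEnvelopingAlgebra.ι ℂ (rep (Xlo k) (r + s))))) =
        ∑ k : Fin d, ∑ j : Fin d, B (bX k) ⁅Xlo i, Xlo j⁆ •
          (π (bX i) ⊗ₜ[ℂ] (π (bX j) ⊗ₜ[ℂ]
            UniversalEnvelopingAlgebra.ι ℂ (rep (Xlo k) (r + s)))) :=
      fun i => Finset.sum_comm
    simp only [h6]
    exact Finset.sum_comm
  have hS2 : (∑ i : Fin d, ∑ j : Fin d,
        (if r + s = 0 then (r : ℂ) * B (Xlo i) (Xlo j) else 0) •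
          (π (bX i) ⊗ₜ[ℂ] (π (bX j) ⊗ₜ[ℂ] UniversalEnvelopingAlgebra.ι ℂ K))) =
      ∑ i : Fin d, (if r + s = 0 then (r : ℂ) else 0) •
        (π (bX i) ⊗ₜ[ℂ] (π (Xlo i) ⊗ₜ[ℂ] UniversalEnvelopingAlgebra.ι ℂ K)) := by
    refine Finset.sum_congr rfl fun i _ => ?_
    conv_rhs => rw [hexpB (Xlo i)]
    rw [hpi]
    simp only [TensorProduct.sum_tmul, ← TensorProduct.smul_tmul',
      TensorProduct.tmul_sum, TensorProduct.tmul_smul, Finset.smul_sum, smul_smul]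
    refine Finset.sum_congr rfl fun j _ => ?_
    by_cases h : r + s = 0 <;> simp [h]
  rw [hL, hS1, hS2]
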